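/- arXiv:1304.7707 — 2 statements merged into one kernel-verified Lean document; each statement's English description precedes it below -/
import Mathlib

section
/- Let 0 → U →ⁱ X →ᵖ Y → 0 be a short exact sequence of left R-modules, let g : U → V be R-linear, and let (Q, q : X → Q, j : V → Q) be the pushout of i along g (so j ∘ g = q ∘ i and the square is a pushout in the category of R-modules); let π : Q → Y be the induced map with π ∘ q = p and π ∘ j = 0, so that 0 → V →ʲ Q →^π Y → 0 is exact. Let f : M → N and φ : N → Y be R-linear and assume Ext¹(φ ∘ f, g) = 0. Then there exists an R-linear map α : M → Q with π ∘ α = φ ∘ f. -/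
universe u

open CategoryTheory

attribute [local instance] HasDerivedCategory.standard

noncomputable instance hasExtModuleCat (R : Type u) [Ring R] :
    HasExt.{u + 1} (ModuleCat.{u} R) :=
  hasExt_of_hasDerivedCategory _

/-- `Ext¹(f, g) = 0`: the induced map `Ext¹(N, U) → Ext¹(M, V)`, sending the class of an
extension of `U` by `N` to the class obtained by pulling back along `f` and pushing out
along `g` (i.e. the Yoneda composite with `f` on the right and `g` on the left), is the
zero map. -/
def ExtVanish (R : Type u) [Ring R] {M N U V : Type u}
    [AddCommGroup M] [Module R M] [AddCommGroup N] [Module R N]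
    [AddCommGroup U] [Module R U] [AddCommGroup V] [Module R V]
    (f : M →ₗ[R] N) (g : U →ₗ[R] V) : Prop :=
  ∀ ε : Abelian.Ext.{u + 1} (ModuleCat.of R N) (ModuleCat.of R U) 1,
    ((Abelian.Ext.mk₀ (ModuleCat.ofHom f)).comp ε (zero_add 1)).comp
      (Abelian.Ext.mk₀ (ModuleCat.ofHom g)) (add_zero 1) = 0

/-!
STATEMENT 2: if `(Q, q, j)` is the pushout of the short exact sequence
`0 → U → X → Y → 0` along `g : U → V`, with induced map `π : Q → Y`, and if
`Ext¹(φ ∘ f, g) = 0`, then `φ ∘ f : M → Y` lifts to `Q` along `π`.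
-/

universe w v

open CategoryTheory Category Pretriangulated

namespace DerivedCategory

variable {C : Type u} [Category.{v} C] [Abelian C] [HasDerivedCategory.{w} C]
  {T T' : ShortComplex (CochainComplex C ℤ)} (hT : T.ShortExact) (hT' : T'.ShortExact)
  (Ψ : T ⟶ T')

lemma map_descShortComplex :
    CochainComplex.mappingCone.map T.f T'.f Ψ.τ₁ Ψ.τ₂ Ψ.comm₁₂.symm ≫
      CochainComplex.mappingCone.descShortComplex T' =
    CochainComplex.mappingCone.descShortComplex T ≫ Ψ.τ₃ := by
  ext n
  simp [CochainComplex.mappingCone.map, CochainComplex.mappingCone.descShortComplex,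
    CochainComplex.mappingCone.ext_from_iff _ (n+1) n rfl,
    Ψ.comm₂₃]
  exact HomologicalComplex.congr_hom Ψ.comm₂₃ n

lemma my_triangleOfSESδ_naturality :
    Q.map Ψ.τ₃ ≫ triangleOfSESδ hT' = triangleOfSESδ hT ≫ (Q.map Ψ.τ₁)⟦(1 : ℤ)⟧' := by
  exact (triangleOfSESδ_naturality hT hT' Ψ).symm

end DerivedCategory

namespace CategoryTheory

namespace ShortComplex

namespace ShortExact

variable {C : Type u} [Category.{v} C] [Abelian C] {S S' : ShortComplex C}

lemma my_singleδ_naturality [HasDerivedCategory.{w} C]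
    (hS : S.ShortExact) (hS' : S'.ShortExact) (Φ : S ⟶ S') :
    (DerivedCategory.singleFunctor C 0).map Φ.τ₃ ≫ hS'.singleδ =
      hS.singleδ ≫ ((DerivedCategory.singleFunctor C 0).map Φ.τ₁)⟦(1 : ℤ)⟧' := by
  have h := (singleTriangle.map hS hS' Φ).comm₃
  exact h.symm

lemma my_extClass_naturality [HasExt.{w} C]
    (hS : S.ShortExact) (hS' : S'.ShortExact) (Φ : S ⟶ S') :
    (Abelian.Ext.mk₀ Φ.τ₃).comp hS'.extClass (zero_add 1) =
      hS.extClass.comp (Abelian.Ext.mk₀ Φ.τ₁) (add_zero 1) := by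
  letI := HasDerivedCategory.standard C
  apply Abelian.Ext.ext
  rw [Abelian.Ext.comp_hom, Abelian.Ext.comp_hom, Abelian.Ext.mk₀_hom, Abelian.Ext.mk₀_hom,
    hS.extClass_hom, hS'.extClass_hom, ShiftedHom.mk₀_comp, ShiftedHom.comp_mk₀]
  exact my_singleδ_naturality hS hS' Φ

end ShortExact

end ShortComplex

end CategoryTheory

section Lift

open DerivedCategory in
lemma my_lift_of_ext0 {C : Type u} [Category.{v} C] [Abelian C] [HasExt.{w} C]
    {X Qq Y : C} (π : Qq ⟶ Y) (ψ : X ⟶ Y) (x : Abelian.Ext X Qq 0)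
    (hx : x.comp (Abelian.Ext.mk₀ π) (add_zero 0) = Abelian.Ext.mk₀ ψ) :
    ∃ α : X ⟶ Qq, α ≫ π = ψ := by
  letI := HasDerivedCategory.standard C
  let H := DerivedCategory.homologyFunctor C 0
  let e := (SingleFunctors.evaluation _ _ 0).mapIso (singleFunctorsPostcompQIso C)
  let η : DerivedCategory.singleFunctor C 0 ⋙ H ≅ 𝟭 C :=
    Functor.isoWhiskerRight e H ≪≫ Functor.associator _ _ _ ≪≫
      Functor.isoWhiskerLeft _ (homologyFunctorFactors C 0) ≪≫
      HomologicalComplex.homologyFunctorSingleIso C (ComplexShape.up ℤ) 0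
  let z := shiftFunctorZero' (DerivedCategory C) (((0 : ℕ) : ℤ)) (by simp)
  let u : (singleFunctor C 0).obj X ⟶ (singleFunctor C 0).obj Qq :=
    x.hom ≫ z.hom.app _
  have hu : u ≫ (singleFunctor C 0).map π = (singleFunctor C 0).map ψ := by
    have h1 := Abelian.Ext.hom_comp_singleFunctor_map_shift (C := C) x π
    have h2 : (x.comp (Abelian.Ext.mk₀ π) (add_zero 0)).hom = (Abelian.Ext.mk₀ ψ).hom := by
      rw [hx]
    rw [← h1] at h2
    have h3 := z.hom.naturality ((singleFunctor C 0).map π)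
    dsimp only [Functor.id_map] at h3
    dsimp only [u]
    rw [Category.assoc, ← h3, ← Category.assoc, h2, Abelian.Ext.mk₀_hom]
    dsimp [ShiftedHom.mk₀, z]
    rw [Category.assoc]
    erw [Iso.inv_hom_id_app]
    simp
  refine ⟨η.inv.app X ≫ H.map u ≫ η.hom.app Qq, ?_⟩
  have h4 := η.hom.naturality π
  dsimp only [Functor.id_map] at h4
  rw [Category.assoc, Category.assoc, ← h4, ← Category.assoc (H.map u), ]
  change η.inv.app X ≫ (H.map u ≫ H.map ((singleFunctor C 0).map π)) ≫ η.hom.app Y = ψ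
  rw [← H.map_comp, hu]
  have h5 := η.hom.naturality ψ
  dsimp only [Functor.id_map] at h5
  change η.inv.app X ≫ (DerivedCategory.singleFunctor C 0 ⋙ H).map ψ ≫ η.hom.app Y = ψ
  rw [h5, Iso.inv_hom_id_app_assoc]

end Lift

theorem stmt2 {R : Type u} [Ring R] {U X Y V Q M N : Type u}
    [AddCommGroup U] [Module R U] [AddCommGroup X] [Module R X]
    [AddCommGroup Y] [Module R Y] [AddCommGroup V] [Module R V]
    [AddCommGroup Q] [Module R Q] [AddCommGroup M] [Module R M]
    [AddCommGroup N] [Module R N]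
    (i : U →ₗ[R] X) (p : X →ₗ[R] Y)
    (hi : Function.Injective i) (hexact : LinearMap.range i = LinearMap.ker p)
    (hp : Function.Surjective p)
    (g : U →ₗ[R] V) (q : X →ₗ[R] Q) (j : V →ₗ[R] Q)
    (hcomm : j ∘ₗ g = q ∘ₗ i)
    (hpushout : ∀ (T : Type u) [AddCommGroup T] [Module R T]
      (a : V →ₗ[R] T) (b : X →ₗ[R] T), a ∘ₗ g = b ∘ₗ i →
        ∃! c : Q →ₗ[R] T, c ∘ₗ j = a ∧ c ∘ₗ q = b)
    (π : Q →ₗ[R] Y) (hπq : π ∘ₗ q = p) (hπj : π ∘ₗ j = 0)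
    (hj : Function.Injective j) (hexact' : LinearMap.range j = LinearMap.ker π)
    (hπ : Function.Surjective π)
    (f : M →ₗ[R] N) (φ : N →ₗ[R] Y)
    (hext : ExtVanish R (φ ∘ₗ f) g) :
    ∃ α : M →ₗ[R] Q, π ∘ₗ α = φ ∘ₗ f := by
  classical
  let S : ShortComplex (ModuleCat.{u} R) :=
    ShortComplex.mk (ModuleCat.ofHom i) (ModuleCat.ofHom p) (by
      ext x
      have : i x ∈ LinearMap.ker p := hexact ▸ LinearMap.mem_range_self i x
      exact this)
  let S' : ShortComplex (ModuleCat.{u} R) :=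
    ShortComplex.mk (ModuleCat.ofHom j) (ModuleCat.ofHom π) (by
      ext v
      have : j v ∈ LinearMap.ker π := hexact' ▸ LinearMap.mem_range_self j v
      exact this)
  have hS : S.ShortExact := by
    refine ShortComplex.ShortExact.mk' ?_ ?_ ?_
    · exact (ShortComplex.moduleCat_exact_iff_range_eq_ker S).2 hexact
    · exact (ModuleCat.mono_iff_injective _).2 hi
    · exact (ModuleCat.epi_iff_surjective _).2 hp
  have hS' : S'.ShortExact := by
    refine ShortComplex.ShortExact.mk' ?_ ?_ ?_
    · exact (ShortComplex.moduleCat_exact_iff_range_eq_ker S').2 hexact'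
    · exact (ModuleCat.mono_iff_injective _).2 hj
    · exact (ModuleCat.epi_iff_surjective _).2 hπ
  let Φ : S ⟶ S' :=
    { τ₁ := ModuleCat.ofHom g
      τ₂ := ModuleCat.ofHom q
      τ₃ := 𝟙 _
      comm₁₂ := by
        ext u
        exact LinearMap.congr_fun hcomm u
      comm₂₃ := by
        ext x
        exact LinearMap.congr_fun hπq x }
  have key : hS'.extClass = hS.extClass.comp (Abelian.Ext.mk₀ (ModuleCat.ofHom g)) (add_zero 1) := by
    have h := ShortComplex.ShortExact.my_extClass_naturality hS hS' Φ
    rw [show Φ.τ₃ = 𝟙 S.X₃ from rfl, Abelian.Ext.mk₀_id_comp] at h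
    exact h
  set ψc : ModuleCat.of R M ⟶ ModuleCat.of R Y := ModuleCat.ofHom (φ ∘ₗ f) with hψc
  have hvan : (Abelian.Ext.mk₀ ψc).comp hS'.extClass (zero_add 1) = 0 := by
    rw [key, ← Abelian.Ext.comp_assoc_of_third_deg_zero]
    exact hext hS.extClass
  obtain ⟨x₂, hx₂⟩ := Abelian.Ext.covariant_sequence_exact₃ (ModuleCat.of R M) hS'
    (Abelian.Ext.mk₀ ψc) (zero_add 1) hvan
  obtain ⟨α, hα⟩ := my_lift_of_ext0 (ModuleCat.ofHom π) ψc x₂ hx₂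
  refine ⟨α.hom, ?_⟩
  ext m
  exact congr_fun (congrArg (fun h => ⇑(ModuleCat.Hom.hom h)) hα) m
end

section
/- Let R be a ring, f : M → N a homomorphism of left R-modules, and V a left R-module. Let H = Hom_R(N, V) and let α : ⨁_{g ∈ H} M → V be the R-linear map defined on the direct sum of copies of M indexed by H by α((x_g)_{g ∈ H}) = Σ_{g ∈ H} g(f(x_g)). Then for every index set J and every R-linear map h : ⨁_{j ∈ J} N → V there exists an R-linear map β : ⨁_{j ∈ J} M → ⨁_{g ∈ H} M such that α ∘ β = h ∘ (⨁_{j ∈ J} f), where ⨁_{j ∈ J} f : ⨁_{j ∈ J} M → ⨁_{j ∈ J} N acts as f in each coordinate. (Hence α is a precover of V for the closure under direct sums of the ideal generated by f.) -/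
/-!
STATEMENT 10: the canonical map `α : ⨁_{g ∈ Hom(N,V)} M → V`, `(x_g) ↦ ∑ g(f(x_g))`,
is a precover of `V` for the closure under direct sums of the ideal generated by `f`.
-/

universe u

open DirectSum

attribute [local instance] Classical.decEq

theorem stmt10 {R : Type u} [Ring R] {M N V : Type u}
    [AddCommGroup M] [Module R M] [AddCommGroup N] [Module R N]
    [AddCommGroup V] [Module R V] (f : M →ₗ[R] N)
    (α : (⨁ _ : (N →ₗ[R] V), M) →ₗ[R] V)
    (hα : α = DirectSum.toModule R (N →ₗ[R] V) V fun g => g ∘ₗ f)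
    (J : Type u) (h : (⨁ _ : J, N) →ₗ[R] V) :
    ∃ β : (⨁ _ : J, M) →ₗ[R] (⨁ _ : (N →ₗ[R] V), M),
      α ∘ₗ β = h ∘ₗ (DFinsupp.mapRange.linearMap fun _ : J => f) := by
  refine ⟨DirectSum.toModule R J _ (fun j =>
    DirectSum.lof R (N →ₗ[R] V) (fun _ => M) (h ∘ₗ DirectSum.lof R J (fun _ => N) j)), ?_⟩
  ext j m
  subst hα
  have e1 : (DFinsupp.lsingle (R:=R) (M:=fun _ : J => M) j) m
      = DirectSum.lof R J (fun _ => M) j m := rfl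
  simp only [LinearMap.comp_apply, DFinsupp.mapRange.linearMap_apply, e1,
    DirectSum.toModule_lof, DFinsupp.mapRange_single]
  have : (DFinsupp.mapRange.linearMap fun _ : J => f) (DirectSum.lof R J (fun _ => M) j m)
      = DirectSum.lof R J (fun _ => N) j (f m) := by
    exact DFinsupp.mapRange_single (hf := fun _ => f.map_zero)
  erw [this]
end
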